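/- Let L be a positive integer, let c ≥ 1 be a real number, let λ be a real number, and let M be a finite set of integers such that for every m ∈ M both c ≤ |Lλ − m| and |λ − m/L| ≤ 1/2 hold. Then ∑_{m∈M} |F_L(λ − m/L)|² ≤ 1/c. -/

import Mathlib

open Finset Real

lemma abs_exp_sub_one_sq (θ : ℝ) :
    ‖Complex.exp (θ * Complex.I) - 1‖ ^ 2 = 2 - 2 * Real.cos θ := by
  rw [Complex.sq_norm, Complex.exp_mul_I]
  simp [Complex.normSq_apply, Complex.cos_ofReal_re, Complex.sin_ofReal_re,
    Complex.cos_ofReal_im, Complex.sin_ofReal_im]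
  nlinarith [Real.sin_sq_add_cos_sq θ]

/-- The averaged geometric phase sum `F_L(x) = (1/L) ∑_{j=0}^{L-1} exp(2πi x j)`. -/
noncomputable def avgPhaseSum (L : ℕ) (x : ℝ) : ℂ :=
  (L : ℂ)⁻¹ * ∑ j ∈ Finset.range L, Complex.exp (2 * Real.pi * Complex.I * x * j)

lemma key (L : ℕ) (hL : 0 < L) (x : ℝ) (hx : |x| ≤ 1/2) (hx0 : x ≠ 0) :
    ‖avgPhaseSum L x‖ ^ 2 ≤ 1 / (4 * ((L:ℝ)*x)^2) := by
  set θ : ℝ := 2 * Real.pi * x with hθ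
  set z : ℂ := Complex.exp (θ * Complex.I) with hz
  have habsz : ‖z‖ = 1 := Complex.norm_exp_ofReal_mul_I θ
  -- lower bound on |z - 1|
  have hθabs : |θ| ≤ Real.pi := by
    rw [hθ, abs_mul, abs_of_nonneg (by positivity : (0:ℝ) ≤ 2 * Real.pi)]
    nlinarith [Real.pi_pos]
  have hcos : Real.cos θ ≤ 1 - 2 / Real.pi ^ 2 * θ ^ 2 :=
    Real.cos_le_one_sub_mul_cos_sq hθabs
  have hlow : 16 * x ^ 2 ≤ ‖z - 1‖ ^ 2 := by
    rw [abs_exp_sub_one_sq θ]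
    have hpi : (0:ℝ) < Real.pi := Real.pi_pos
    have : 2 / Real.pi ^ 2 * θ ^ 2 = 8 * x ^ 2 := by
      field_simp [hθ]; ring
    nlinarith
  have hx2 : (0:ℝ) < x ^ 2 := by positivity
  have hz1 : z ≠ 1 := by
    intro h
    rw [h] at hlow; simp at hlow; nlinarith
  have habs1 : (4:ℝ) * |x| ≤ ‖z - 1‖ := by
    have h1 : (0:ℝ) ≤ ‖z - 1‖ := norm_nonneg _
    nlinarith [abs_nonneg x, sq_abs x]
  -- rewrite the sum
  have hsum : ∑ j ∈ Finset.range L, Complex.exp (2 * Real.pi * Complex.I * x * j)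
      = (z ^ L - 1) / (z - 1) := by
    rw [← geom_sum_eq hz1]
    refine Finset.sum_congr rfl fun j _ => ?_
    rw [hz, ← Complex.exp_nat_mul]
    congr 1
    rw [hθ]
    push_cast
    ring
  have habsnum : ‖z ^ L - 1‖ ≤ 2 := by
    calc ‖z ^ L - 1‖ ≤ ‖z ^ L‖ + 1 := by
          simpa using norm_sub_le (z ^ L) 1
      _ ≤ 2 := by rw [norm_pow, habsz]; norm_num
  have habsF : ‖avgPhaseSum L x‖ ≤ 1 / (2 * L * |x|) := by
    rw [avgPhaseSum, hsum, norm_mul, norm_div]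
    rw [norm_inv, Complex.norm_natCast]
    have hLpos : (0:ℝ) < L := Nat.cast_pos.mpr hL
    have hxpos : (0:ℝ) < |x| := abs_pos.mpr hx0
    have hzpos : (0:ℝ) < ‖z - 1‖ := lt_of_lt_of_le (by positivity) habs1
    calc (L:ℝ)⁻¹ * (‖z ^ L - 1‖ / ‖z - 1‖)
        ≤ (L:ℝ)⁻¹ * (2 / (4 * |x|)) := by gcongr
      _ = 1 / (2 * L * |x|) := by field_simp; ring
  have h0 : (0:ℝ) ≤ ‖avgPhaseSum L x‖ := norm_nonneg _
  have hLpos : (0:ℝ) < L := Nat.cast_pos.mpr hL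
  have hxpos : (0:ℝ) < |x| := abs_pos.mpr hx0
  calc ‖avgPhaseSum L x‖ ^ 2 ≤ (1 / (2 * L * |x|)) ^ 2 := by
        exact pow_le_pow_left₀ h0 habsF 2
    _ = 1 / (4 * ((L:ℝ)*x)^2) := by
        rw [div_pow, one_pow]
        congr 1
        rw [mul_pow, mul_pow, sq_abs]; ring

lemma tele (c : ℝ) (hc : 1 ≤ c) (N : ℕ) :
    ∑ k ∈ Finset.range N, 1 / (c + 1 + k) ^ 2 ≤ 1 / c - 1 / (c + N) := by
  induction N with
  | zero => simp
  | succ N ih =>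
    rw [Finset.sum_range_succ]
    have h1 : (0:ℝ) < c + N := by positivity
    have h2 : (0:ℝ) < c + (N+1:ℕ) := by positivity
    have h3 : 1 / (c + 1 + (N:ℝ)) ^ 2 ≤ 1 / (c + N) - 1 / (c + (N+1:ℕ)) := by
      push_cast
      rw [div_sub_div _ _ (by positivity) (by positivity)]
      rw [div_le_div_iff₀ (by positivity) (by positivity)]
      ring_nf
      nlinarith
    push_cast at *
    linarith

lemma sum_inv_sq_le (c : ℝ) (hc : 1 ≤ c) (S : Finset ℕ) :
    ∑ k ∈ S, 1 / (c + k) ^ 2 ≤ 2 / c := by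
  have hc0 : (0:ℝ) < c := lt_of_lt_of_le one_pos hc
  obtain ⟨N, hN⟩ : ∃ N, S ⊆ Finset.range N := ⟨S.sup id + 1, fun k hk =>
    Finset.mem_range.mpr (Nat.lt_succ_of_le (Finset.le_sup (f := id) hk))⟩
  calc ∑ k ∈ S, 1 / (c + k) ^ 2 ≤ ∑ k ∈ Finset.range N, 1 / (c + k) ^ 2 :=
        Finset.sum_le_sum_of_subset_of_nonneg hN (fun k _ _ => by positivity)
    _ ≤ 2 / c := by
        cases N with
        | zero => simp; positivity
        | succ N =>
          rw [Finset.sum_range_succ']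
          have := tele c hc N
          have h2 : ∑ k ∈ Finset.range N, 1 / (c + ((k:ℕ) + 1 : ℕ)) ^ 2
              ≤ 1 / c - 1 / (c + N) := by
            refine le_trans (le_of_eq (Finset.sum_congr rfl fun k _ => ?_)) this
            push_cast; ring_nf
          have h4 : (0:ℝ) < c + N := by positivity
          have h5 : 1 / (c + (0:ℕ)) ^ 2 ≤ 1 / c := by
            simp only [Nat.cast_zero, add_zero]
            rw [div_le_div_iff₀ (by positivity) hc0]
            nlinarith
          have h6 : (0:ℝ) ≤ 1 / (c + N) := by positivity
          have h7 : 2 / c = 1 / c + 1 / c := by ring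
          linarith

lemma side_bound (c : ℝ) (hc : 1 ≤ c) (S : Finset ℤ) (e : ℤ → ℕ)
    (hinj : Set.InjOn e S) (f : ℤ → ℝ)
    (hf : ∀ m ∈ S, f m ≤ (1/4) * (1 / (c + e m) ^ 2)) :
    ∑ m ∈ S, f m ≤ 1 / (2 * c) := by
  have hc0 : (0:ℝ) < c := lt_of_lt_of_le one_pos hc
  calc ∑ m ∈ S, f m ≤ ∑ m ∈ S, (1/4) * (1 / (c + e m) ^ 2) := Finset.sum_le_sum hf
    _ = (1/4) * ∑ m ∈ S, 1 / (c + e m) ^ 2 := by rw [Finset.mul_sum]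
    _ = (1/4) * ∑ k ∈ S.image e, 1 / (c + k) ^ 2 := by
        rw [Finset.sum_image (fun a ha b hb h => hinj ha hb h)]
    _ ≤ (1/4) * (2 / c) := by
        have := sum_inv_sq_le c hc (S.image e)
        linarith
    _ = 1 / (2 * c) := by ring

/-- Almost-zero property: if every `m ∈ M` satisfies `c ≤ |Lλ − m|` and `|λ − m/L| ≤ 1/2`,
then `∑_{m∈M} |F_L(λ − m/L)|² ≤ 1/c`. -/
theorem sum_abs_avgPhaseSum_sq_le (L : ℕ) (hL : 0 < L) (c : ℝ) (hc : 1 ≤ c)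
    (lam : ℝ) (M : Finset ℤ)
    (hM : ∀ m ∈ M, c ≤ |(L : ℝ) * lam - m| ∧ |lam - (m : ℝ) / L| ≤ 1 / 2) :
    ∑ m ∈ M, (‖avgPhaseSum L (lam - (m : ℝ) / L)‖) ^ 2 ≤ 1 / c := by
  classical
  have hc0 : (0:ℝ) < c := lt_of_lt_of_le one_pos hc
  have hLpos : (0:ℝ) < L := Nat.cast_pos.mpr hL
  set t : ℝ := (L : ℝ) * lam with ht
  -- per-term bound
  have hterm : ∀ m ∈ M, (‖avgPhaseSum L (lam - (m : ℝ) / L)‖) ^ 2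
      ≤ 1 / (4 * (t - m) ^ 2) := by
    intro m hm
    obtain ⟨h1, h2⟩ := hM m hm
    have hLx : (L:ℝ) * (lam - (m : ℝ) / L) = t - m := by
      field_simp
      rw [ht]
    have hx0 : lam - (m : ℝ) / L ≠ 0 := by
      intro h
      rw [h, mul_zero] at hLx
      rw [← hLx] at h1
      simp at h1
      linarith
    have := key L hL (lam - (m : ℝ) / L) h2 hx0
    rwa [hLx] at this
  have hstep : ∑ m ∈ M, (‖avgPhaseSum L (lam - (m : ℝ) / L)‖) ^ 2
      ≤ ∑ m ∈ M, 1 / (4 * (t - m) ^ 2) := Finset.sum_le_sum hterm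
  refine hstep.trans ?_
  -- distance facts
  have hdist : ∀ m ∈ M, c ≤ |t - m| := fun m hm => (hM m hm).1
  -- split into left and right of t
  rw [← Finset.sum_filter_add_sum_filter_not M (fun m : ℤ => (m:ℝ) ≤ t)]
  have hleft : ∑ m ∈ M.filter (fun m : ℤ => (m:ℝ) ≤ t), 1 / (4 * (t - m) ^ 2)
      ≤ 1 / (2 * c) := by
    apply side_bound c hc _ (fun m => (⌊t - c⌋ - m).toNat)
    · intro a ha b hb h
      simp only [Finset.coe_filter, Set.mem_setOf_eq, Finset.mem_filter] at ha hb
      have ha' : a ≤ ⌊t - c⌋ := Int.le_floor.mpr (by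
        have := hdist a ha.1
        rw [abs_of_nonneg (by linarith [ha.2])] at this
        push_cast; linarith)
      have hb' : b ≤ ⌊t - c⌋ := Int.le_floor.mpr (by
        have := hdist b hb.1
        rw [abs_of_nonneg (by linarith [hb.2])] at this
        push_cast; linarith)
      replace h : (⌊t - c⌋ - a).toNat = (⌊t - c⌋ - b).toNat := h
      omega
    · intro m hm
      simp only [Finset.mem_filter] at hm
      have hm' : (m:ℝ) ≤ t - c := by
        have := hdist m hm.1
        rw [abs_of_nonneg (by linarith [hm.2])] at this
        linarith
      have hfl : m ≤ ⌊t - c⌋ := Int.le_floor.mpr hm'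
      have hcast : ((⌊t - c⌋ - m).toNat : ℝ) = (⌊t - c⌋ : ℝ) - m := by
        have h0 : (0:ℤ) ≤ ⌊t - c⌋ - m := by omega
        rw [← Int.cast_natCast, Int.toNat_of_nonneg h0]
        push_cast
        ring
      have hkey : c + ((⌊t - c⌋ - m).toNat : ℝ) ≤ t - m := by
        rw [hcast]
        have := Int.floor_le (t - c)
        linarith
      have hpos : (0:ℝ) < c + ((⌊t - c⌋ - m).toNat : ℝ) := by positivity
      have hsq : (c + ((⌊t - c⌋ - m).toNat : ℝ)) ^ 2 ≤ (t - m) ^ 2 := by nlinarith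
      calc 1 / (4 * (t - m) ^ 2) ≤ 1 / (4 * (c + ((⌊t - c⌋ - m).toNat : ℝ)) ^ 2) := by
            gcongr
      _ = (1/4) * (1 / (c + ((⌊t - c⌋ - m).toNat : ℝ)) ^ 2) := by
            have hne : (c + ((⌊t - c⌋ - m).toNat : ℝ)) ^ 2 ≠ 0 := by positivity
            field_simp
  have hright : ∑ m ∈ M.filter (fun m : ℤ => ¬ (m:ℝ) ≤ t), 1 / (4 * (t - m) ^ 2)
      ≤ 1 / (2 * c) := by
    apply side_bound c hc _ (fun m => (m - ⌈t + c⌉).toNat)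
    · intro a ha b hb h
      simp only [Finset.coe_filter, Set.mem_setOf_eq, Finset.mem_filter] at ha hb
      have ha' : ⌈t + c⌉ ≤ a := Int.ceil_le.mpr (by
        have := hdist a ha.1
        rw [abs_of_nonpos (by push_cast; linarith [ha.2, not_le.mp ha.2])] at this
        push_cast; linarith)
      have hb' : ⌈t + c⌉ ≤ b := Int.ceil_le.mpr (by
        have := hdist b hb.1
        rw [abs_of_nonpos (by push_cast; linarith [not_le.mp hb.2])] at this
        push_cast; linarith)
      replace h : (a - ⌈t + c⌉).toNat = (b - ⌈t + c⌉).toNat := h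
      omega
    · intro m hm
      simp only [Finset.mem_filter] at hm
      have hmt : t < m := not_le.mp hm.2
      have hm' : t + c ≤ (m:ℝ) := by
        have := hdist m hm.1
        rw [abs_of_nonpos (by linarith)] at this
        linarith
      have hcl : ⌈t + c⌉ ≤ m := Int.ceil_le.mpr hm'
      have hcast : ((m - ⌈t + c⌉).toNat : ℝ) = (m : ℝ) - ⌈t + c⌉ := by
        have h0 : (0:ℤ) ≤ m - ⌈t + c⌉ := by omega
        rw [← Int.cast_natCast, Int.toNat_of_nonneg h0]
        push_cast
        ring
      have hkey : c + ((m - ⌈t + c⌉).toNat : ℝ) ≤ (m:ℝ) - t := by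
        rw [hcast]
        have := Int.le_ceil (t + c)
        linarith
      have hpos : (0:ℝ) < c + ((m - ⌈t + c⌉).toNat : ℝ) := by positivity
      have hsq : (c + ((m - ⌈t + c⌉).toNat : ℝ)) ^ 2 ≤ (t - m) ^ 2 := by nlinarith
      calc 1 / (4 * (t - m) ^ 2) ≤ 1 / (4 * (c + ((m - ⌈t + c⌉).toNat : ℝ)) ^ 2) := by
            gcongr
      _ = (1/4) * (1 / (c + ((m - ⌈t + c⌉).toNat : ℝ)) ^ 2) := by
            have hne : (c + ((m - ⌈t + c⌉).toNat : ℝ)) ^ 2 ≠ 0 := by positivity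
            field_simp
  have : 1 / (2 * c) + 1 / (2 * c) = 1 / c := by ring
  linarith
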